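/- For two bidders with both ROS and budget constraints, in rFPA(alpha) with alpha = 1.4, every undominated bid profile satisfies 1.8 · LW ≥ OPT; i.e., rFPA(1.4) obtains at least a 1/1.8 fraction of the liquid welfare of the optimal randomized allocation. -/

import Mathlib

open Finset
open scoped Classical

noncomputable section

/-- An allocation: each entry in `[0,1]`, and each query allocated total probability at most 1. -/
def IsAlloc {n q : ℕ} (π : Fin n → Fin q → ℝ) : Prop :=
  (∀ i j, 0 ≤ π i j) ∧ (∀ i j, π i j ≤ 1) ∧ ∀ j, ∑ i, π i j ≤ 1

/-- An integral (deterministic) allocation. -/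
def IsIntegralAlloc {n q : ℕ} (π : Fin n → Fin q → ℝ) : Prop :=
  IsAlloc π ∧ ∀ i j, π i j = 0 ∨ π i j = 1

/-- Liquid welfare of an allocation. -/
def allocLW {n q : ℕ} (B : Fin n → ℝ) (v π : Fin n → Fin q → ℝ) : ℝ :=
  ∑ i, min (B i) (∑ j, π i j * v i j)

/-- Winning probability of a bidder bidding `bi` against an opponent bidding `bo`
in the randomized first-price auction with parameter `α`. -/
def rfpaProb (α bi bo : ℝ) : ℝ :=
  if bi = 0 ∧ bo = 0 then 0
  else if α * bo ≤ bi then 1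
  else if α * bi ≤ bo then 0
  else (1 / 2) * (1 + Real.log (bi / bo) / Real.log α)

/-- Probability that bidder `i` wins query `j` in rFPA(α) with two bidders. -/
def rfpaPi {q : ℕ} (α : ℝ) (b : Fin 2 → Fin q → ℝ) (i : Fin 2) (j : Fin q) : ℝ :=
  rfpaProb α (b i j) (b (i + 1) j)

/-- Expected value of bidder `i` in rFPA(α). -/
def rfpaV {q : ℕ} (α : ℝ) (v b : Fin 2 → Fin q → ℝ) (i : Fin 2) : ℝ :=
  ∑ j, rfpaPi α b i j * v i j

/-- Expected spend of bidder `i` in rFPA(α). -/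
def rfpaSpendI {q : ℕ} (α : ℝ) (b : Fin 2 → Fin q → ℝ) (i : Fin 2) : ℝ :=
  ∑ j, rfpaPi α b i j * b i j

/-- Liquid welfare of a bid profile in rFPA(α). -/
def rfpaLW {q : ℕ} (α : ℝ) (B : Fin 2 → ℝ) (v b : Fin 2 → Fin q → ℝ) : ℝ :=
  ∑ i, min (B i) (rfpaV α v b i)

/-- Undominated (equilibrium) bid profile for rFPA(α) with ROS and budget constraints. -/
def IsRfpaEq {q : ℕ} (α : ℝ) (B : Fin 2 → ℝ) (v b : Fin 2 → Fin q → ℝ) : Prop :=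
  (∀ i j, 0 ≤ b i j) ∧
  (∀ i, rfpaSpendI α b i ≤ min (B i) (rfpaV α v b i)) ∧
  (∀ i (b' : Fin q → ℝ), (∀ j, 0 ≤ b' j) →
    rfpaV α v (Function.update b i b') i ≤ rfpaV α v b i ∨
    min (B i) (rfpaV α v (Function.update b i b') i)
      < rfpaSpendI α (Function.update b i b') i)


namespace S15

lemma exp_quad_le {t : ℝ} (h0 : 0 ≤ t) (h1 : t ≤ 1) :
    Real.exp t ≤ 1 + t + 0.75 * t ^ 2 := by
  have h := Real.exp_bound' h0 h1 (n := 2) (by norm_num)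
  simp [Finset.sum_range_succ, Nat.factorial] at h
  nlinarith [h]

lemma exp_cubic_le {t : ℝ} (h0 : 0 ≤ t) (h1 : t ≤ 1) :
    Real.exp t ≤ 1 + t + t ^ 2 / 2 + (2/9) * t ^ 3 := by
  have h := Real.exp_bound' h0 h1 (n := 3) (by norm_num)
  simp [Finset.sum_range_succ, Nat.factorial] at h
  nlinarith [h]

lemma log14_pos : 0 < Real.log 1.4 := Real.log_pos (by norm_num)

lemma exp_log14 : Real.exp (Real.log 1.4) = 1.4 := Real.exp_log (by norm_num)

lemma log14_le : Real.log 1.4 ≤ 0.34 := by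
  rw [Real.log_le_iff_le_exp (by norm_num)]
  have h := Real.sum_le_exp_of_nonneg (x := 0.34) (by norm_num) 4
  simp [Finset.sum_range_succ, Nat.factorial] at h
  nlinarith [h]

lemma le_log14 : (0.33 : ℝ) ≤ Real.log 1.4 := by
  rw [Real.le_log_iff_exp_le (by norm_num)]
  have h := exp_cubic_le (t := 0.33) (by norm_num) (by norm_num)
  nlinarith [h]


lemma prob_nonneg {x y : ℝ} (hx : 0 ≤ x) (hy : 0 ≤ y) : 0 ≤ rfpaProb 1.4 x y := by
  unfold rfpaProb
  split_ifs with h1 h2 h3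
  · norm_num
  · norm_num
  · norm_num
  · push_neg at h1 h2 h3
    have hx0 : 0 < x := by
      rcases hx.lt_or_eq with h | h
      · exact h
      · exfalso; rw [← h] at h3; nlinarith
    have hy0 : 0 < y := by
      rcases hy.lt_or_eq with h | h
      · exact h
      · exfalso; rw [← h] at h2; nlinarith
    have hu : -Real.log 1.4 < Real.log (x / y) := by
      have : Real.log (y / x) < Real.log 1.4 :=
        Real.log_lt_log (by positivity) (by rw [div_lt_iff₀ hx0]; nlinarith)
      have e : Real.log (y / x) = - Real.log (x / y) := by
        rw [← Real.log_inv]; congr 1; field_simp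
      linarith [e ▸ this]
    have hL := log14_pos
    have : (-1 : ℝ) < Real.log (x / y) / Real.log 1.4 := by
      rw [lt_div_iff₀ hL]; linarith
    nlinarith


/-- key single-variable inequality -/
lemma key_ineq {u : ℝ} (hmL : -Real.log 1.4 < u) (huL : u < Real.log 1.4) :
    Real.exp u ≤ 1.07 * ((1/2) * (1 + u / Real.log 1.4) * Real.exp u
      + (1/2) * (1 - u / Real.log 1.4)) := by
  set L := Real.log 1.4 with hLdef
  have hL := log14_pos
  have hLle : L ≤ 0.34 := log14_le
  have hLge : (0.33:ℝ) ≤ L := le_log14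
  set t : ℝ := u / L with ht
  have hut : u = t * L := by rw [ht]; exact (div_mul_cancel₀ u hL.ne').symm
  have ht1 : t < 1 := by rw [ht, div_lt_one hL]; exact huL
  rcases le_or_gt u 0 with hu | hu
  · -- easy side
    have htneg : t ≤ 0 := div_nonpos_of_nonpos_of_nonneg hu hL.le
    have htm1 : -1 < t := by rw [ht, lt_div_iff₀ hL]; nlinarith
    have hA1 : Real.exp u ≤ 1 := Real.exp_le_one_iff.2 hu
    have hA0 : 0 < Real.exp u := Real.exp_pos u
    have hint : 0 ≤ (1 - t) * (1 - Real.exp u) := by nlinarith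
    nlinarith
  · -- hard side
    have ht0 : 0 < t := div_pos hu hL
    have hu1 : u ≤ 1 := by nlinarith
    have hA1 : Real.exp u ≤ 1 + u + 0.75 * u ^ 2 := exp_quad_le hu.le hu1
    have hA2 : 1 + u ≤ Real.exp u := by linarith [Real.add_one_le_exp u]
    -- final polynomial inequality
    have hpoly : 0.465 * (t*L) + 0.75 * (t*L)^2 - 0.535 * t * (t*L) ≤ 0.07 := by
      have h1 : 0.465 * (t*L) ≤ 0.1581 * t := by nlinarith
      have h2 : 0.535 * t * (t*L) - 0.75 * (t*L)^2 = t^2 * (L * (0.535 - 0.75 * L)) := by ring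
      have h3 : t^2 * (L * (0.535 - 0.75*L)) ≥ 0.0924 * t^2 := by nlinarith [sq_nonneg t]
      nlinarith [sq_nonneg (t - 6/7)]
    nlinarith [mul_nonneg ht0.le (sub_nonneg.2 hA2), sq_nonneg u]


lemma bid_le_spend {x y : ℝ} (hx : 0 ≤ x) (hy : 0 ≤ y) :
    x ≤ 1.07 * (rfpaProb 1.4 x y * x + rfpaProb 1.4 y x * y) := by
  have hpxy := prob_nonneg hx hy
  have hpyx := prob_nonneg hy hx
  rcases hx.lt_or_eq with hx0 | hx0
  swap
  · rw [← hx0]; nlinarith [prob_nonneg hy (le_refl (0:ℝ)), prob_nonneg (le_refl (0:ℝ)) hy]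
  rcases hy.lt_or_eq with hy0 | hy0
  swap
  · -- y = 0
    have hp : rfpaProb 1.4 x y = 1 := by
      unfold rfpaProb
      rw [if_neg (by push_neg; intro h; exact absurd h (by linarith)),
        if_pos (by rw [← hy0]; linarith)]
    rw [hp]; nlinarith
  by_cases hc1 : 1.4 * y ≤ x
  · have hp : rfpaProb 1.4 x y = 1 := by
      unfold rfpaProb
      rw [if_neg (by push_neg; intro h; exact absurd h (by linarith)), if_pos hc1]
    rw [hp]; nlinarith
  by_cases hc2 : 1.4 * x ≤ y
  · have hp : rfpaProb 1.4 y x = 1 := by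
      unfold rfpaProb
      rw [if_neg (by push_neg; intro h; exact absurd h (by linarith)), if_pos hc2]
    rw [hp]; nlinarith
  · -- interior
    have hL := log14_pos
    have hp : rfpaProb 1.4 x y = (1/2) * (1 + Real.log (x/y) / Real.log 1.4) := by
      unfold rfpaProb
      rw [if_neg (by push_neg; intro h; exact absurd h (by linarith)), if_neg hc1, if_neg hc2]
    have hp' : rfpaProb 1.4 y x = (1/2) * (1 - Real.log (x/y) / Real.log 1.4) := by
      unfold rfpaProb
      rw [if_neg (by push_neg; intro h; exact absurd h (by linarith)), if_neg hc2, if_neg hc1]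
      have e : Real.log (y / x) = - Real.log (x / y) := by
        rw [← Real.log_inv]; congr 1; field_simp
      rw [e]; ring
    set u := Real.log (x/y) with hu
    have hxy : x = Real.exp u * y := by
      rw [hu, Real.exp_log (by positivity)]; field_simp
    have hmL : -Real.log 1.4 < u := by
      have : Real.log (y / x) < Real.log 1.4 :=
        Real.log_lt_log (by positivity) (by rw [div_lt_iff₀ hx0]; nlinarith)
      have e : Real.log (y / x) = - Real.log (x / y) := by
        rw [← Real.log_inv]; congr 1; field_simp
      rw [e] at this; linarith
    have huL : u < Real.log 1.4 :=
      Real.log_lt_log (by positivity) (by rw [div_lt_iff₀ hy0]; nlinarith)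
    have hk := key_ineq hmL huL
    rw [hp, hp', hxy]
    nlinarith [mul_le_mul_of_nonneg_right hk hy, Real.exp_pos u]


/-- probability obtained by the canonical deviation bid `exp((2w-1)L) * c` against `c > 0`. -/
lemma prob_of_expbid {c w : ℝ} (hc : 0 < c) (h0 : 0 ≤ w) (h1 : w ≤ 1) :
    rfpaProb 1.4 (Real.exp ((2 * w - 1) * Real.log 1.4) * c) c = w := by
  have hL := log14_pos
  have hE : 0 < Real.exp ((2 * w - 1) * Real.log 1.4) := Real.exp_pos _
  unfold rfpaProb
  rw [if_neg (by push_neg; intro h; exact absurd h (by nlinarith))]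
  rcases eq_or_lt_of_le h1 with hw1 | hw1
  · -- w = 1
    subst hw1
    rw [if_pos]
    rw [show (2:ℝ) * 1 - 1 = 1 by norm_num, one_mul, exp_log14]
  · rw [if_neg]
    swap
    · push_neg
      have h' : Real.exp ((2 * w - 1) * Real.log 1.4) < 1.4 := by
        have := Real.exp_lt_exp.2 (show (2*w-1)*Real.log 1.4 < Real.log 1.4 by nlinarith)
        rwa [exp_log14] at this
      nlinarith
    rcases eq_or_lt_of_le h0 with hw0 | hw0
    · -- w = 0
      subst hw0
      rw [if_pos]
      have : Real.exp ((2 * 0 - 1) * Real.log 1.4) = 1 / 1.4 := by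
        rw [show (2*(0:ℝ)-1) * Real.log 1.4 = -(Real.log 1.4) by ring, Real.exp_neg, exp_log14]
        norm_num
      rw [this]; nlinarith
    · rw [if_neg]
      swap
      · push_neg
        have h' : (1:ℝ) < 1.4 * Real.exp ((2 * w - 1) * Real.log 1.4) := by
          have := Real.exp_lt_exp.2
            (show (0:ℝ) < Real.log 1.4 + (2*w-1)*Real.log 1.4 by nlinarith)
          rwa [Real.exp_zero, Real.exp_add, exp_log14] at this
        nlinarith
      · rw [mul_div_assoc, div_self hc.ne', mul_one, Real.log_exp]
        field_simp
        ring


lemma fin2_succ_ne (i : Fin 2) : i + 1 ≠ i := by fin_cases i <;> decide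

lemma master {q : ℕ} (B : Fin 2 → ℝ) (v b : Fin 2 → Fin q → ℝ)
    (hv : ∀ i j, 0 ≤ v i j)
    (hb : IsRfpaEq 1.4 B v b) (i : Fin 2) (w : Fin q → ℝ)
    (hw0 : ∀ j, 0 ≤ w j) (hw1 : ∀ j, w j ≤ 1) :
    (∑ j, w j * v i j) ≤ rfpaV 1.4 v b i ∨
      min (B i) (∑ j, w j * v i j) ≤
        ∑ j, w j * Real.exp ((2 * w j - 1) * Real.log 1.4) * b (i + 1) j := by
  have hone : i + 1 ≠ i := fin2_succ_ne i
  set o := i + 1 with ho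
  set W := ∑ j, w j * v i j with hW
  set C := ∑ j, w j * Real.exp ((2 * w j - 1) * Real.log 1.4) * b o j with hC
  set wbar : Fin q → ℝ := fun j => if b o j = 0 then (if w j = 0 then 0 else 1) else w j
    with hwbar
  set Vbar := ∑ j, wbar j * v i j with hVbar
  have hWVbar : W ≤ Vbar := by
    apply Finset.sum_le_sum
    intro j _
    simp only [hwbar]
    split_ifs with h1 h2
    · simp [h2]
    · have := hw1 j
      nlinarith [hv i j, hw0 j]
    · exact le_rfl
  have key : ∀ ε : ℝ, 0 < ε → ¬ (Vbar ≤ rfpaV 1.4 v b i) → min (B i) W ≤ C + q * ε := by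
    intro ε hε hVb
    set b' : Fin q → ℝ := fun j =>
      if b o j = 0 then (if w j = 0 then 0 else ε) else
        Real.exp ((2 * w j - 1) * Real.log 1.4) * b o j with hb'
    have hb'0 : ∀ j, 0 ≤ b' j := by
      intro j
      simp only [hb']
      split_ifs with h1 h2
      · norm_num
      · exact hε.le
      · have hbo : 0 ≤ b o j := hb.1 o j
        positivity
    have hpi : ∀ j, rfpaPi 1.4 (Function.update b i b') i j = wbar j := by
      intro j
      unfold rfpaPi
      rw [Function.update_self, ← ho, Function.update_of_ne hone]
      simp only [hb', hwbar]
      split_ifs with h1 h2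
      · unfold rfpaProb
        simp [h1, h2]
      · unfold rfpaProb
        rw [if_neg (by rintro ⟨h, -⟩; exact hε.ne' h),
          if_pos (by rw [h1]; nlinarith)]
      · have hbo : 0 < b o j := lt_of_le_of_ne (hb.1 o j) (Ne.symm h1)
        exact prob_of_expbid hbo (hw0 j) (hw1 j)
    have hV : rfpaV 1.4 v (Function.update b i b') i = Vbar := by
      unfold rfpaV
      rw [hVbar]
      exact Finset.sum_congr rfl fun j _ => by rw [hpi j]
    have hS : rfpaSpendI 1.4 (Function.update b i b') i ≤ C + q * ε := by
      unfold rfpaSpendI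
      have : ∀ j : Fin q, rfpaPi 1.4 (Function.update b i b') i j *
          (Function.update b i b') i j ≤
          w j * Real.exp ((2 * w j - 1) * Real.log 1.4) * b o j + ε := by
        intro j
        rw [hpi j, Function.update_self]
        simp only [hb', hwbar]
        split_ifs with h1 h2
        · simp [h1]
          positivity
        · simp [h1]
        · have hbo : 0 ≤ b o j := hb.1 o j
          nlinarith [Real.exp_pos ((2 * w j - 1) * Real.log 1.4), hw0 j]
      calc ∑ j, rfpaPi 1.4 (Function.update b i b') i j * (Function.update b i b') i j
          ≤ ∑ j : Fin q, (w j * Real.exp ((2 * w j - 1) * Real.log 1.4) * b o j + ε) :=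
            Finset.sum_le_sum fun j _ => this j
        _ = C + q * ε := by
            rw [Finset.sum_add_distrib, Finset.sum_const, Finset.card_univ]
            simp [hC, Fintype.card_fin, nsmul_eq_mul]
    rcases hb.2.2 i b' hb'0 with hcase | hcase
    · rw [hV] at hcase; exact absurd hcase hVb
    · rw [hV] at hcase
      calc min (B i) W ≤ min (B i) Vbar := min_le_min le_rfl hWVbar
        _ ≤ rfpaSpendI 1.4 (Function.update b i b') i := hcase.le
        _ ≤ C + q * ε := hS
  by_cases hVb : Vbar ≤ rfpaV 1.4 v b i
  · left; exact hWVbar.trans hVb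
  · right
    by_contra hcon
    push_neg at hcon
    have hd : 0 < min (B i) W - C := by linarith
    have hq1 : (0:ℝ) < (q:ℝ) + 1 := by positivity
    have hk := key ((min (B i) W - C) / ((q:ℝ) + 1)) (by positivity) hVb
    have h2 : (q:ℝ) * ((min (B i) W - C) / ((q:ℝ) + 1)) < min (B i) W - C := by
      have hlt : (q:ℝ)/((q:ℝ)+1) < 1 := by rw [div_lt_one hq1]; linarith
      calc (q:ℝ) * ((min (B i) W - C)/((q:ℝ)+1))
          = (q:ℝ)/((q:ℝ)+1) * (min (B i) W - C) := by ring
        _ < 1 * (min (B i) W - C) := by exact mul_lt_mul_of_pos_right hlt hd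
        _ = _ := one_mul _
    linarith


lemma fin2_succ_succ (i : Fin 2) : i + 1 + 1 = i := by fin_cases i <;> decide

section Main

variable {q : ℕ} (B : Fin 2 → ℝ) (v b π : Fin 2 → Fin q → ℝ)

lemma V_nonneg (hv : ∀ i j, 0 ≤ v i j) (hbnn : ∀ i j, 0 ≤ b i j) (i : Fin 2) :
    0 ≤ rfpaV 1.4 v b i :=
  Finset.sum_nonneg fun j _ =>
    mul_nonneg (prob_nonneg (hbnn i j) (hbnn (i+1) j)) (hv i j)

lemma spendj_nonneg (hbnn : ∀ i j, 0 ≤ b i j) (j : Fin q) :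
    0 ≤ rfpaPi 1.4 b 0 j * b 0 j + rfpaPi 1.4 b 1 j * b 1 j := by
  have h0 := prob_nonneg (hbnn 0 j) (hbnn (0+1) j)
  have h1 := prob_nonneg (hbnn 1 j) (hbnn (1+1) j)
  unfold rfpaPi
  nlinarith [hbnn 0 j, hbnn 1 j]

lemma bid_le_spendj (hbnn : ∀ i j, 0 ≤ b i j) (i : Fin 2) (j : Fin q) :
    b i j ≤ 1.07 * (rfpaPi 1.4 b i j * b i j + rfpaPi 1.4 b (i+1) j * b (i+1) j) := by
  have h := bid_le_spend (hbnn i j) (hbnn (i+1) j)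
  unfold rfpaPi
  rw [fin2_succ_succ]
  linarith

lemma spend_sum_eq :
    rfpaSpendI 1.4 b 0 + rfpaSpendI 1.4 b 1
      = ∑ j, (rfpaPi 1.4 b 0 j * b 0 j + rfpaPi 1.4 b 1 j * b 1 j) := by
  unfold rfpaSpendI
  rw [← Finset.sum_add_distrib]

lemma T_bound (hbnn : ∀ i j, 0 ≤ b i j) (hπ0 : ∀ i j, 0 ≤ π i j)
    (hπ1 : ∀ i j, π i j ≤ 1) (i : Fin 2) :
    (∑ j, π i j * b (i+1) j) ≤ 1.07 * (rfpaSpendI 1.4 b 0 + rfpaSpendI 1.4 b 1) := by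
  rw [spend_sum_eq, Finset.mul_sum]
  apply Finset.sum_le_sum
  intro j _
  have h1 : π i j * b (i+1) j ≤ b (i+1) j := by
    nlinarith [hπ0 i j, hπ1 i j, hbnn (i+1) j]
  have h2 := bid_le_spendj b hbnn (i+1) j
  rw [fin2_succ_succ] at h2
  have h3 : rfpaPi 1.4 b (i+1) j * b (i+1) j + rfpaPi 1.4 b i j * b i j
      = rfpaPi 1.4 b 0 j * b 0 j + rfpaPi 1.4 b 1 j * b 1 j := by
    fin_cases i <;> simp <;> ring
  rw [h3] at h2
  linarith


end Main

variable {q : ℕ} {B : Fin 2 → ℝ} {v b π : Fin 2 → Fin q → ℝ}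

lemma expsig (σ : ℝ) (h0 : 0 ≤ σ) (h1 : σ ≤ 1) :
    Real.exp (2 * σ * Real.log 1.4) * (1 - σ) ≤ 1 := by
  have hL := log14_pos
  have hLle := log14_le
  have e1 : Real.exp (2 * σ * Real.log 1.4) ≤ Real.exp σ :=
    Real.exp_le_exp.2 (by nlinarith)
  have e2 : 1 - σ ≤ Real.exp (-σ) := by linarith [Real.add_one_le_exp (-σ)]
  calc Real.exp (2 * σ * Real.log 1.4) * (1 - σ)
      ≤ Real.exp σ * Real.exp (-σ) := by
        apply mul_le_mul e1 e2 (by linarith) (Real.exp_pos σ).le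
    _ = 1 := by rw [← Real.exp_add]; simp
  
lemma exp01L : Real.exp (0.1 * Real.log 1.4) ≤ 1.035 := by
  have hL := log14_pos
  have hLle := log14_le
  have h1 : Real.exp (0.1 * Real.log 1.4) ≤ Real.exp 0.034 :=
    Real.exp_le_exp.2 (by nlinarith)
  have h2 := exp_quad_le (t := 0.034) (by norm_num) (by norm_num)
  calc Real.exp (0.1 * Real.log 1.4) ≤ Real.exp 0.034 := h1
    _ ≤ 1 + 0.034 + 0.75 * 0.034^2 := h2
    _ ≤ 1.035 := by norm_num

set_option maxHeartbeats 2000000 in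
lemma subL1 (hB : ∀ i, 0 < B i) (hv : ∀ i j, 0 ≤ v i j)
    (hb : IsRfpaEq 1.4 B v b)
    (hπ0 : ∀ i j, 0 ≤ π i j) (hπ1 : ∀ i j, π i j ≤ 1) (i : Fin 2)
    (hOV : rfpaV 1.4 v b i < ∑ j, π i j * v i j) :
    min (B i) (∑ j, π i j * v i j) ≤
      0.8 * min (B (i+1)) (rfpaV 1.4 v b (i+1)) + 1.8 * min (B i) (rfpaV 1.4 v b i) := by
  have hL := log14_pos
  have hbnn := hb.1
  set L := Real.log 1.4 with hLdef
  set V := rfpaV 1.4 v b i with hV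
  set O := ∑ j, π i j * v i j with hO
  set ℓo := min (B (i+1)) (rfpaV 1.4 v b (i+1)) with hℓo
  set T := ∑ j, π i j * b (i+1) j with hT
  have hVnn : 0 ≤ V := V_nonneg v b hv hbnn i
  have hOpos : 0 < O := lt_of_le_of_lt hVnn hOV
  have hℓonn : 0 ≤ ℓo := le_min (hB _).le (V_nonneg v b hv hbnn _)
  have hTnn : 0 ≤ T :=
    Finset.sum_nonneg fun j _ => mul_nonneg (hπ0 i j) (hbnn (i+1) j)
  have hS0 := hb.2.1 0
  have hS1 := hb.2.1 1
  have hTb' := T_bound b π hbnn hπ0 hπ1 i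
  have hSsum : rfpaSpendI 1.4 b 0 + rfpaSpendI 1.4 b 1 ≤ ℓo + min (B i) V := by
    have e : min (B 0) (rfpaV 1.4 v b 0) + min (B 1) (rfpaV 1.4 v b 1)
        = ℓo + min (B i) V := by
      rw [hℓo, hV]; fin_cases i <;> simp <;> ring
    linarith [hS0, hS1, e.symm.le]
  have hTb : T ≤ 1.07 * (ℓo + min (B i) V) := by nlinarith
  by_cases hBV : B i ≤ V
  · have h1 : min (B i) O ≤ B i := min_le_left _ _
    have h2 : min (B i) V = B i := min_eq_left hBV
    rw [h2]; nlinarith [hB i]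
  push_neg at hBV
  have hminV : min (B i) V = V := min_eq_right hBV.le
  rw [hminV] at hTb ⊢
  -- the scaled-deviation consequence
  have CL : ∀ μ : ℝ, 0 < μ → μ ≤ 1 → V < μ * O → μ * O ≤ B i →
      O ≤ Real.exp ((2*μ-1) * L) * T := by
    intro μ hμ0 hμ1 hVμ hμB
    have hw0 : ∀ j, 0 ≤ μ * π i j := fun j => mul_nonneg hμ0.le (hπ0 i j)
    have hw1 : ∀ j, μ * π i j ≤ 1 := fun j => by nlinarith [hπ0 i j, hπ1 i j]
    have hWO : (∑ j, (μ * π i j) * v i j) = μ * O := by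
      rw [hO, Finset.mul_sum]
      exact Finset.sum_congr rfl fun j _ => by ring
    rcases master B v b hv hb i (fun j => μ * π i j) hw0 hw1 with h | h
    · rw [hWO] at h; exfalso; linarith
    · rw [hWO, min_eq_right hμB] at h
      have hC : (∑ j, (μ * π i j) * Real.exp ((2*(μ * π i j)-1) * L) * b (i+1) j)
          ≤ μ * (Real.exp ((2*μ-1) * L) * T) := by
        rw [hT, Finset.mul_sum, Finset.mul_sum]
        apply Finset.sum_le_sum
        intro j _
        have hexp : Real.exp ((2*(μ * π i j)-1) * L) ≤ Real.exp ((2*μ-1) * L) :=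
          Real.exp_le_exp.2 (by
            nlinarith [mul_nonneg (mul_nonneg hL.le hμ0.le) (sub_nonneg.2 (hπ1 i j))])
        have h1 : 0 ≤ μ * π i j := hw0 j
        have h2 : 0 ≤ b (i+1) j := hbnn (i+1) j
        calc (μ * π i j) * Real.exp ((2*(μ * π i j)-1) * L) * b (i+1) j
            ≤ (μ * π i j) * Real.exp ((2*μ-1) * L) * b (i+1) j := by
              have := mul_le_mul_of_nonneg_left hexp h1
              exact mul_le_mul_of_nonneg_right this h2
          _ = μ * (Real.exp ((2*μ-1) * L) * (π i j * b (i+1) j)) := by ring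
      have := h.trans hC
      exact le_of_mul_le_mul_left (by linarith) hμ0
  clear_value V O ℓo T
  clear hV hO hℓo hT hTb' hSsum hS0 hS1
  set σ := V / O with hσ
  have hσ0 : 0 ≤ σ := div_nonneg hVnn hOpos.le
  have hσ1 : σ < 1 := (div_lt_one hOpos).2 hOV
  have hVσ : V = σ * O := by rw [hσ]; field_simp
  clear_value σ
  clear hσ hb hv hπ0 hπ1 hbnn hminV
  -- context slimmed
  by_cases hcase : σ + 0.05 ≤ 1 ∧ (σ + 0.05) * O ≤ B i
  · obtain ⟨hc1, hc2⟩ := hcase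
    have hcl := CL (σ + 0.05) (by linarith) hc1 (by nlinarith) hc2
    have he : 0 < Real.exp ((2*(σ+0.05)-1) * L) := Real.exp_pos _
    have hOE : O ≤ 1.07 * Real.exp ((2*(σ+0.05)-1) * L) * (ℓo + V) := by
      calc O ≤ Real.exp ((2*(σ+0.05)-1) * L) * T := hcl
        _ ≤ Real.exp ((2*(σ+0.05)-1) * L) * (1.07 * (ℓo + V)) :=
            mul_le_mul_of_nonneg_left hTb he.le
        _ = 1.07 * Real.exp ((2*(σ+0.05)-1) * L) * (ℓo + V) := by ring
    have hEsplit : Real.exp ((2*(σ+0.05)-1) * L)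
        = Real.exp (0.1 * L) * Real.exp (-L) * Real.exp (2*σ*L) := by
      rw [← Real.exp_add, ← Real.exp_add]; ring_nf
    have hexpneg : Real.exp (-L) = 1/1.4 := by
      rw [Real.exp_neg, hLdef, exp_log14]; norm_num
    have hE : (1.07 * Real.exp ((2*(σ+0.05)-1) * L)) * (1 - σ) ≤ 0.8 := by
      rw [hEsplit, hexpneg]
      have s1 := expsig σ hσ0 hσ1.le
      have s2 := exp01L
      have p1 : 0 < Real.exp (0.1 * L) := Real.exp_pos _
      have p2 : 0 < Real.exp (2*σ*L) := Real.exp_pos _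
      rw [← hLdef] at s1 s2
      calc 1.07 * (Real.exp (0.1*L) * (1/1.4) * Real.exp (2*σ*L)) * (1-σ)
          = (1.07 * (1/1.4)) * Real.exp (0.1*L) * (Real.exp (2*σ*L) * (1-σ)) := by ring
        _ ≤ (1.07 * (1/1.4)) * Real.exp (0.1*L) * 1 := by
            apply mul_le_mul_of_nonneg_left s1 (by positivity)
        _ = (1.07 * (1/1.4)) * Real.exp (0.1*L) := mul_one _
        _ ≤ (1.07 * (1/1.4)) * 1.035 := by nlinarith
        _ ≤ 0.8 := by norm_num
    -- combine
    have hmul : (1-σ) * O ≤ (1-σ) * (1.07 * Real.exp ((2*(σ+0.05)-1) * L) * (ℓo + V)) :=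
      mul_le_mul_of_nonneg_left hOE (by linarith)
    have hmul2 : (1-σ) * (1.07 * Real.exp ((2*(σ+0.05)-1) * L) * (ℓo + V))
        ≤ 0.8 * (ℓo + V) := by
      have hnn : 0 ≤ ℓo + V := by linarith
      calc (1-σ) * (1.07 * Real.exp ((2*(σ+0.05)-1) * L) * (ℓo + V))
          = ((1.07 * Real.exp ((2*(σ+0.05)-1) * L)) * (1 - σ)) * (ℓo + V) := by ring
        _ ≤ 0.8 * (ℓo + V) := mul_le_mul_of_nonneg_right hE hnn
    have hlin : (1 - σ) * O ≤ 0.8 * (ℓo + V) := le_trans hmul hmul2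
    clear hmul hmul2 hOE hE hEsplit hexpneg hcl he CL hTb
    have hfin : O ≤ 0.8 * ℓo + 1.8 * V := by nlinarith [hlin, hVσ]
    have : min (B i) O ≤ O := min_le_right _ _
    linarith
  · push_neg at hcase
    by_cases hσbig : 1 < σ + 0.05
    · have h1 : min (B i) O ≤ O := min_le_right _ _
      have h2 : O ≤ 1.8 * V := by nlinarith
      linarith
    · have hc1 : σ + 0.05 ≤ 1 := le_of_not_gt hσbig
      have hc2 : B i < (σ + 0.05) * O := hcase hc1
      have hBO : (B i / O) * O = B i := div_mul_cancel₀ _ hOpos.ne'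
      have hσB : σ < B i / O := by nlinarith
      have hBO' : B i / O < σ + 0.05 := by nlinarith
      set μ := (σ + B i / O) / 2 with hμ
      have hμ0 : 0 < μ := by
        have : 0 < B i / O := div_pos (hB i) hOpos
        rw [hμ]; linarith
      have hμ1 : μ ≤ 1 := by rw [hμ]; linarith
      have hVμ : V < μ * O := by
        rw [hVσ]
        have : σ < μ := by rw [hμ]; linarith
        nlinarith
      have hμB : μ * O ≤ B i := by
        have e : μ * O = (σ * O + (B i / O) * O) / 2 := by rw [hμ]; ring
        rw [e, hBO, ← hVσ]; linarith
      have hcl := CL μ hμ0 hμ1 hVμ hμB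
      have hexp14 : Real.exp ((2*μ-1) * L) ≤ 1.4 := by
        have h' : (2*μ-1) * L ≤ L := by nlinarith
        calc Real.exp ((2*μ-1) * L) ≤ Real.exp L := Real.exp_le_exp.2 h'
          _ = 1.4 := by rw [hLdef]; exact exp_log14
      have hO14 : O ≤ 1.4 * T := by
        calc O ≤ Real.exp ((2*μ-1) * L) * T := hcl
          _ ≤ 1.4 * T := mul_le_mul_of_nonneg_right hexp14 hTnn
      have h1 : min (B i) O ≤ B i := min_le_left _ _
      nlinarith


set_option maxHeartbeats 2000000 in
lemma subL2 (hB : ∀ i, 0 < B i) (hv : ∀ i j, 0 ≤ v i j)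
    (hb : IsRfpaEq 1.4 B v b)
    (hπ0 : ∀ i j, 0 ≤ π i j) (hπ1 : ∀ i j, π i j ≤ 1)
    (hπsum : ∀ j, π 0 j + π 1 j ≤ 1)
    (h0 : rfpaV 1.4 v b 0 < ∑ j, π 0 j * v 0 j)
    (h1 : rfpaV 1.4 v b 1 < ∑ j, π 1 j * v 1 j) :
    min (B 0) (∑ j, π 0 j * v 0 j) + min (B 1) (∑ j, π 1 j * v 1 j)
      ≤ 1.8 * (min (B 0) (rfpaV 1.4 v b 0) + min (B 1) (rfpaV 1.4 v b 1)) := by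
  have hL := log14_pos
  have hbnn := hb.1
  have e01 : ((0:Fin 2)+1) = 1 := by decide
  have e10 : ((1:Fin 2)+1) = 0 := by decide
  have m0 : min (B 0) (∑ j, π 0 j * v 0 j)
      ≤ ∑ j, π 0 j * Real.exp ((2 * π 0 j - 1) * Real.log 1.4) * b 1 j := by
    rcases master B v b hv hb 0 (π 0) (fun j => hπ0 0 j) (fun j => hπ1 0 j) with h | h
    · exfalso; linarith
    · rw [e01] at h; exact h
  have m1 : min (B 1) (∑ j, π 1 j * v 1 j)
      ≤ ∑ j, π 1 j * Real.exp ((2 * π 1 j - 1) * Real.log 1.4) * b 0 j := by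
    rcases master B v b hv hb 1 (π 1) (fun j => hπ0 1 j) (fun j => hπ1 1 j) with h | h
    · exfalso; linarith
    · rw [e10] at h; exact h
  have hexpb : ∀ (x : ℝ), x ≤ 1 → Real.exp ((2 * x - 1) * Real.log 1.4) ≤ 1.4 := by
    intro x hx
    calc Real.exp ((2 * x - 1) * Real.log 1.4) ≤ Real.exp (Real.log 1.4) :=
        Real.exp_le_exp.2 (by nlinarith)
      _ = 1.4 := exp_log14
  have step : (∑ j, π 0 j * Real.exp ((2 * π 0 j - 1) * Real.log 1.4) * b 1 j)
      + (∑ j, π 1 j * Real.exp ((2 * π 1 j - 1) * Real.log 1.4) * b 0 j)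
      ≤ ∑ j, (1.4 * 1.07) * (rfpaPi 1.4 b 0 j * b 0 j + rfpaPi 1.4 b 1 j * b 1 j) := by
    rw [← Finset.sum_add_distrib]
    apply Finset.sum_le_sum
    intro j _
    have hsp := spendj_nonneg b hbnn j
    have hb0 := bid_le_spendj b hbnn 0 j
    have hb1 := bid_le_spendj b hbnn 1 j
    rw [e01] at hb0
    rw [e10] at hb1
    have q0 : π 0 j * Real.exp ((2 * π 0 j - 1) * Real.log 1.4) * b 1 j
        ≤ 1.4 * (π 0 j * b 1 j) := by
      have := hexpb (π 0 j) (hπ1 0 j)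
      nlinarith [mul_nonneg (hπ0 0 j) (hbnn 1 j), Real.exp_pos ((2 * π 0 j - 1) * Real.log 1.4)]
    have q1 : π 1 j * Real.exp ((2 * π 1 j - 1) * Real.log 1.4) * b 0 j
        ≤ 1.4 * (π 1 j * b 0 j) := by
      have := hexpb (π 1 j) (hπ1 1 j)
      nlinarith [mul_nonneg (hπ0 1 j) (hbnn 0 j), Real.exp_pos ((2 * π 1 j - 1) * Real.log 1.4)]
    have r0 : π 0 j * b 1 j ≤ π 0 j * (1.07 * (rfpaPi 1.4 b 0 j * b 0 j + rfpaPi 1.4 b 1 j * b 1 j)) :=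
      mul_le_mul_of_nonneg_left (by linarith) (hπ0 0 j)
    have r1 : π 1 j * b 0 j ≤ π 1 j * (1.07 * (rfpaPi 1.4 b 0 j * b 0 j + rfpaPi 1.4 b 1 j * b 1 j)) :=
      mul_le_mul_of_nonneg_left (by linarith) (hπ0 1 j)
    nlinarith [hπsum j, mul_nonneg (hπ0 0 j) hsp, mul_nonneg (hπ0 1 j) hsp]
  have hsum : (∑ j, (1.4 * 1.07) * (rfpaPi 1.4 b 0 j * b 0 j + rfpaPi 1.4 b 1 j * b 1 j))
      = (1.4 * 1.07) * (rfpaSpendI 1.4 b 0 + rfpaSpendI 1.4 b 1) := by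
    rw [spend_sum_eq, ← Finset.mul_sum]
  have hS0 := hb.2.1 0
  have hS1 := hb.2.1 1
  have hl0 : (0:ℝ) ≤ min (B 0) (rfpaV 1.4 v b 0) :=
    le_min (hB 0).le (V_nonneg v b hv hbnn 0)
  have hl1 : (0:ℝ) ≤ min (B 1) (rfpaV 1.4 v b 1) :=
    le_min (hB 1).le (V_nonneg v b hv hbnn 1)
  rw [hsum] at step
  linarith

set_option maxHeartbeats 2000000 in
theorem stmt15' (hB : ∀ i, 0 < B i) (hv : ∀ i j, 0 ≤ v i j)
    (hb : IsRfpaEq 1.4 B v b)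
    (OPT : ℝ)
    (hOPT : IsGreatest {w : ℝ | ∃ π : Fin 2 → Fin q → ℝ, IsAlloc π ∧ w = allocLW B v π} OPT) :
    OPT ≤ 1.8 * rfpaLW 1.4 B v b := by
  obtain ⟨π, hA, hOPTeq⟩ := hOPT.1
  obtain ⟨hπ0, hπ1, hπsum⟩ := hA
  have hbnn := hb.1
  have e01 : ((0:Fin 2)+1) = 1 := by decide
  have e10 : ((1:Fin 2)+1) = 0 := by decide
  have hπsum' : ∀ j, π 0 j + π 1 j ≤ 1 := by
    intro j
    have := hπsum j
    rwa [Fin.sum_univ_two] at this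
  have hLW : rfpaLW 1.4 B v b
      = min (B 0) (rfpaV 1.4 v b 0) + min (B 1) (rfpaV 1.4 v b 1) := by
    unfold rfpaLW; rw [Fin.sum_univ_two]
  have hOPT2 : OPT = min (B 0) (∑ j, π 0 j * v 0 j) + min (B 1) (∑ j, π 1 j * v 1 j) := by
    rw [hOPTeq]; unfold allocLW; rw [Fin.sum_univ_two]
  have hl0 : (0:ℝ) ≤ min (B 0) (rfpaV 1.4 v b 0) :=
    le_min (hB 0).le (V_nonneg v b hv hbnn 0)
  have hl1 : (0:ℝ) ≤ min (B 1) (rfpaV 1.4 v b 1) :=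
    le_min (hB 1).le (V_nonneg v b hv hbnn 1)
  rw [hOPT2, hLW]
  rcases le_or_gt (∑ j, π 0 j * v 0 j) (rfpaV 1.4 v b 0) with hA0 | hA0 <;>
    rcases le_or_gt (∑ j, π 1 j * v 1 j) (rfpaV 1.4 v b 1) with hA1 | hA1
  · have t0 : min (B 0) (∑ j, π 0 j * v 0 j) ≤ min (B 0) (rfpaV 1.4 v b 0) :=
      min_le_min le_rfl hA0
    have t1 : min (B 1) (∑ j, π 1 j * v 1 j) ≤ min (B 1) (rfpaV 1.4 v b 1) :=
      min_le_min le_rfl hA1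
    linarith
  · have t0 : min (B 0) (∑ j, π 0 j * v 0 j) ≤ min (B 0) (rfpaV 1.4 v b 0) :=
      min_le_min le_rfl hA0
    have t1 := subL1 hB hv hb hπ0 hπ1 1 hA1
    rw [e10] at t1
    linarith
  · have t1 : min (B 1) (∑ j, π 1 j * v 1 j) ≤ min (B 1) (rfpaV 1.4 v b 1) :=
      min_le_min le_rfl hA1
    have t0 := subL1 hB hv hb hπ0 hπ1 0 hA0
    rw [e01] at t0
    linarith
  · have := subL2 hB hv hb hπ0 hπ1 hπsum' hA0 hA1
    linarith



end S15

/-- for two bidders with ROS and budget constraints, in rFPA(1.4) every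
undominated bid profile satisfies `1.8 * LW ≥ OPT`. -/
theorem stmt15 (q : ℕ) (B : Fin 2 → ℝ) (v b : Fin 2 → Fin q → ℝ)
    (hB : ∀ i, 0 < B i) (hv : ∀ i j, 0 ≤ v i j)
    (hb : IsRfpaEq 1.4 B v b)
    (OPT : ℝ)
    (hOPT : IsGreatest {w : ℝ | ∃ π : Fin 2 → Fin q → ℝ, IsAlloc π ∧ w = allocLW B v π} OPT) :
    OPT ≤ 1.8 * rfpaLW 1.4 B v b := by
  exact S15.stmt15' hB hv hb OPT hOPT
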